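/- Let $g_t^\star=\mathrm{diag}(e^t, e^{-w_1 t},\dots,e^{-w_d t}, e^{-w_{d+1}t},\dots,e^{-w_n t})$ where $\mathbf{w}=(w_1,\dots,w_n)$ is a weight vector with $w_1=\dots=w_d=w_{\max}:=\max_i w_i$, and let $g_{c,k}^\star=\mathrm{diag}(c,\underbrace{c^{-(m+1)/d}k^{m/d},\dots}_{d},\underbrace{c/k,\dots}_{m})$ with $m=n-d$, $k\in\mathbb{N}$, $0<c<1$. Let $\mathbf{f}(\mathbf{x})=(\mathbf{x},f_1(\mathbf{x}),\dots,f_m(\mathbf{x}))$ with Jacobian $J(\mathbf{x})$ of $(f_1,\dots,f_m)$, and let $u_1^\star(\mathbf{x})$ be the block upper-triangular matrix with rows $(1, -\mathbf{x}, -f(\mathbf{x}))$, $(0, I_d, J(\mathbf{x}))$, $(0,0,I_m)$. Suppose $\mathbf{x}$ is such that the lattice $g_{c,k}^\star g_t^\star u_1^\star(\mathbf{x})\mathbb{Z}^{n+1}$ contains a nonzero vector of sup-norm less than $c$ for some $t$. Then there exists a nonzero integer vector $(a_0,\mathbf{a})\in\mathbb{Z}\times\mathbb{Z}^n$ with $|a_0+\mathbf{a}\cdot\mathbf{f}(\mathbf{x})|\le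 e^{-t}$, $\|\nabla f(\mathbf{x})\mathbf{a}^T\|_\infty \le c\, c^{(m+1)/d} k^{-m/d} e^{w_{\max}t}$ (where the gradient part refers to the first $d$ coordinates of $\mathbf{a}$ combined with $J(\mathbf{x})$ applied to the last $m$ coordinates), and $|a_i|\le k e^{w_i t}$ for $d+1\le i\le n$. -/

import Mathlib

/-- The dual diagonal flow `g_t^⋆ = diag(e^t, e^{-w₁t},…,e^{-w_n t})` (`n = d + m`). -/
noncomputable def gstarT (d m : ℕ) (w : Fin (d+m) → ℝ) (t : ℝ) :
    Matrix (Fin (d+m+1)) (Fin (d+m+1)) ℝ :=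
  Matrix.diagonal (fun i => if h : i.val = 0 then Real.exp t
    else Real.exp (-(w ⟨i.val - 1, by have := i.isLt; omega⟩) * t))

/-- The dual scaling matrix
`g_{c,k}^⋆ = diag(c, c^{-(m+1)/d} k^{m/d} (d times), c/k (m times))`. -/
noncomputable def gstarCK (d m k : ℕ) (c : ℝ) : Matrix (Fin (d+m+1)) (Fin (d+m+1)) ℝ :=
  Matrix.diagonal (fun i => if i.val = 0 then c
    else if i.val ≤ d then c ^ (-(((m : ℝ) + 1) / d)) * (k : ℝ) ^ ((m : ℝ) / d)
    else c / k)

/-- The dual unipotent matrix `u₁^⋆(x)` with rows `(1, -x, -f(x))`, `(0, I_d, J(x))`,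
`(0, 0, I_m)`. -/
noncomputable def u1star (d m : ℕ) (x : Fin d → ℝ) (fval : Fin m → ℝ)
    (J : Fin d → Fin m → ℝ) : Matrix (Fin (d+m+1)) (Fin (d+m+1)) ℝ :=
  fun i j =>
    if hi : i.val = 0 then
      (if hj : j.val = 0 then 1
        else if hj' : j.val ≤ d then -x ⟨j.val - 1, by omega⟩
        else -fval ⟨j.val - 1 - d, by have := j.isLt; omega⟩)
    else if hi' : i.val ≤ d then
      (if i.val = j.val then 1
        else if hj' : d < j.val then
          J ⟨i.val - 1, by omega⟩ ⟨j.val - 1 - d, by have := j.isLt; omega⟩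
        else 0)
    else (if i.val = j.val then 1 else 0)

section aux

variable (d m : ℕ) (x : Fin d → ℝ) (fval : Fin m → ℝ) (J : Fin d → Fin m → ℝ)
  (vr : Fin (d+m+1) → ℝ)

lemma row0_sum :
    (∑ j, u1star d m x fval J 0 j * vr j)
      = vr 0 + ∑ i : Fin d, (-x i) * vr ⟨i.val+1, by have := i.isLt; omega⟩
        + ∑ j : Fin m, (-fval j) * vr ⟨d+j.val+1, by have := j.isLt; omega⟩ := by
  rw [Fin.sum_univ_succ, Fin.sum_univ_add]
  have h0 : u1star d m x fval J 0 0 * vr 0 = vr 0 := by rw [u1star]; norm_num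
  have h1 : ∑ i : Fin d, u1star d m x fval J 0 (Fin.castAdd m i).succ * vr (Fin.castAdd m i).succ
      = ∑ i : Fin d, (-x i) * vr ⟨i.val+1, by have := i.isLt; omega⟩ := by
    apply Finset.sum_congr rfl
    intro i _
    have hidx : ((Fin.castAdd m i).succ : Fin (d+m+1)) = ⟨i.val+1, by have := i.isLt; omega⟩ := by
      apply Fin.ext; simp
    rw [hidx, u1star]
    simp only [Fin.val_zero, Fin.val_mk]
    rw [dif_pos trivial, dif_neg (by omega), dif_pos (by have := i.isLt; omega)]
    have : (⟨i.val+1-1, by omega⟩ : Fin d) = i := by apply Fin.ext; simp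
    rw [this]
  have h2 : ∑ j : Fin m, u1star d m x fval J 0 (Fin.natAdd d j).succ * vr (Fin.natAdd d j).succ
      = ∑ j : Fin m, (-fval j) * vr ⟨d+j.val+1, by have := j.isLt; omega⟩ := by
    apply Finset.sum_congr rfl
    intro j _
    have hidx : ((Fin.natAdd d j).succ : Fin (d+m+1)) = ⟨d+j.val+1, by have := j.isLt; omega⟩ := by
      apply Fin.ext; simp
    rw [hidx, u1star]
    simp only [Fin.val_zero, Fin.val_mk]
    rw [dif_pos trivial, dif_neg (by omega), dif_neg (by omega)]
    have : (⟨d+j.val+1-1-d, by have := j.isLt; omega⟩ : Fin m) = j := by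
      apply Fin.ext; simp only [Fin.val_mk]; omega
    rw [this]
  rw [h0, h1, h2]; ring

lemma rowmid_sum (i : Fin d) :
    (∑ j, u1star d m x fval J ⟨i.val+1, by have := i.isLt; omega⟩ j * vr j)
      = vr ⟨i.val+1, by have := i.isLt; omega⟩
        + ∑ j : Fin m, J i j * vr ⟨d+j.val+1, by have := j.isLt; omega⟩ := by
  have hiLt := i.isLt
  rw [Fin.sum_univ_succ, Fin.sum_univ_add]
  have h0 : u1star d m x fval J ⟨i.val+1, by omega⟩ 0 * vr 0 = 0 := by
    rw [u1star]
    simp only [Fin.val_zero, Fin.val_mk]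
    rw [dif_neg (by omega), dif_pos (by omega)]; simp only [Nat.add_one_ne_zero, Nat.not_lt_zero, ↓reduceIte, ↓reduceDIte]
    ring
  have h1 : ∑ i' : Fin d, u1star d m x fval J ⟨i.val+1, by omega⟩ (Fin.castAdd m i').succ
        * vr (Fin.castAdd m i').succ
      = vr ⟨i.val+1, by omega⟩ := by
    rw [Finset.sum_eq_single i]
    · have hidx : ((Fin.castAdd m i).succ : Fin (d+m+1)) = ⟨i.val+1, by omega⟩ := by
        apply Fin.ext; simp
      rw [hidx, u1star]
      simp only [Fin.val_mk]
      rw [dif_neg (by omega), dif_pos (by omega), if_pos trivial]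
      ring
    · intro i' _ hne
      have hidx : ((Fin.castAdd m i').succ : Fin (d+m+1)) = ⟨i'.val+1, by have := i'.isLt; omega⟩ := by
        apply Fin.ext; simp
      have hvne : i.val ≠ i'.val := fun h => hne (Fin.ext h.symm)
      rw [hidx, u1star]
      simp only [Fin.val_mk]
      rw [dif_neg (by omega), dif_pos (by omega), if_neg (by omega),
        dif_neg (by have := i'.isLt; omega)]
      ring
    · intro h; exact absurd (Finset.mem_univ i) h
  have h2 : ∑ j : Fin m, u1star d m x fval J ⟨i.val+1, by omega⟩ (Fin.natAdd d j).succ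
        * vr (Fin.natAdd d j).succ
      = ∑ j : Fin m, J i j * vr ⟨d+j.val+1, by have := j.isLt; omega⟩ := by
    apply Finset.sum_congr rfl
    intro j _
    have hjLt := j.isLt
    have hidx : ((Fin.natAdd d j).succ : Fin (d+m+1)) = ⟨d+j.val+1, by omega⟩ := by
      apply Fin.ext; simp
    rw [hidx, u1star]
    simp only [Fin.val_mk]
    rw [dif_neg (by omega), dif_pos (by omega), if_neg (by omega), dif_pos (by omega)]
    have e1 : (⟨i.val+1-1, by omega⟩ : Fin d) = i := by apply Fin.ext; simp
    have e2 : (⟨d+j.val+1-1-d, by omega⟩ : Fin m) = j := by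
      apply Fin.ext; simp only [Fin.val_mk]; omega
    rw [e1, e2]
  rw [h0, h1, h2]; ring

lemma rowbot_sum (j : Fin m) :
    (∑ j', u1star d m x fval J ⟨d+j.val+1, by have := j.isLt; omega⟩ j' * vr j')
      = vr ⟨d+j.val+1, by have := j.isLt; omega⟩ := by
  have hjLt := j.isLt
  rw [Fin.sum_univ_succ, Fin.sum_univ_add]
  have h0 : u1star d m x fval J ⟨d+j.val+1, by omega⟩ 0 * vr 0 = 0 := by
    rw [u1star]
    simp only [Fin.val_zero, Fin.val_mk]
    rw [dif_neg (by omega), dif_neg (by omega)]; simp only [Nat.add_one_ne_zero, ↓reduceIte]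
    ring
  have h1 : ∑ i' : Fin d, u1star d m x fval J ⟨d+j.val+1, by omega⟩ (Fin.castAdd m i').succ
        * vr (Fin.castAdd m i').succ = 0 := by
    apply Finset.sum_eq_zero
    intro i' _
    have hidx : ((Fin.castAdd m i').succ : Fin (d+m+1)) = ⟨i'.val+1, by have := i'.isLt; omega⟩ := by
      apply Fin.ext; simp
    rw [hidx, u1star]
    simp only [Fin.val_mk]
    rw [dif_neg (by omega), dif_neg (by omega), if_neg (by have := i'.isLt; omega)]
    ring
  have h2 : ∑ j' : Fin m, u1star d m x fval J ⟨d+j.val+1, by omega⟩ (Fin.natAdd d j').succ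
        * vr (Fin.natAdd d j').succ = vr ⟨d+j.val+1, by omega⟩ := by
    rw [Finset.sum_eq_single j]
    · have hidx : ((Fin.natAdd d j).succ : Fin (d+m+1)) = ⟨d+j.val+1, by omega⟩ := by
        apply Fin.ext; simp
      rw [hidx, u1star]
      simp only [Fin.val_mk]
      rw [dif_neg (by omega), dif_neg (by omega), if_pos trivial]
      ring
    · intro j' _ hne
      have hidx : ((Fin.natAdd d j').succ : Fin (d+m+1)) = ⟨d+j'.val+1, by have := j'.isLt; omega⟩ := by
        apply Fin.ext; simp
      have hvne : j.val ≠ j'.val := fun h => hne (Fin.ext h.symm)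
      rw [hidx, u1star]
      simp only [Fin.val_mk]
      rw [dif_neg (by omega), dif_neg (by omega), if_neg (by omega)]
      ring
    · intro h; exact absurd (Finset.mem_univ j) h
  rw [h0, h1, h2]; ring

end aux

set_option maxHeartbeats 2000000 in
/-- Unpacking the dynamical short-vector condition
`λ₁(g_{c,k}^⋆ g_t^⋆ u₁^⋆(x) ℤ^{n+1}) < c` into an explicit Diophantine system. -/
theorem stmt_9 (d m k : ℕ) (hd : 0 < d) (hk : 0 < k) (c t : ℝ) (hc0 : 0 < c) (hc1 : c < 1)
    (w : Fin (d+m) → ℝ) (wmax : ℝ) (hwmax : ∀ i, w i ≤ wmax)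
    (hweq : ∀ i : Fin (d+m), i.val < d → w i = wmax)
    (hwpos : ∀ i, 0 < w i) (hwsum : ∑ i, w i = 1)
    (x : Fin d → ℝ) (fval : Fin m → ℝ) (J : Fin d → Fin m → ℝ)
    (hshort : ∃ v : Fin (d+m+1) → ℤ, v ≠ 0 ∧ ∀ i,
      |((gstarCK d m k c) * (gstarT d m w t) * (u1star d m x fval J)).mulVec
        (fun j => (v j : ℝ)) i| < c) :
    ∃ a : Fin (d+m+1) → ℤ, a ≠ 0 ∧
      |(a 0 : ℝ) + ∑ i : Fin d, (a ⟨i.val + 1, by have := i.isLt; omega⟩ : ℝ) * x i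
        + ∑ j : Fin m, (a ⟨d + j.val + 1, by have := j.isLt; omega⟩ : ℝ) * fval j|
          ≤ Real.exp (-t) ∧
      (∀ i : Fin d, |(a ⟨i.val + 1, by have := i.isLt; omega⟩ : ℝ)
          + ∑ j : Fin m, J i j * (a ⟨d + j.val + 1, by have := j.isLt; omega⟩ : ℝ)|
        ≤ c * c ^ (((m : ℝ) + 1) / d) * (k : ℝ) ^ (-((m : ℝ) / d)) * Real.exp (wmax * t)) ∧
      (∀ j : Fin m, |(a ⟨d + j.val + 1, by have := j.isLt; omega⟩ : ℝ)|
        ≤ (k : ℝ) * Real.exp (w ⟨d + j.val, by have := j.isLt; omega⟩ * t)) := by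
  obtain ⟨v, hvne, hv⟩ := hshort
  set vr : Fin (d+m+1) → ℝ := fun j => (v j : ℝ) with hvrdef
  -- the row formula for the product matrix
  have hrow : ∀ i : Fin (d+m+1),
      ((gstarCK d m k c) * (gstarT d m w t) * (u1star d m x fval J)).mulVec vr i
      = ((if i.val = 0 then c
            else if i.val ≤ d then c ^ (-(((m : ℝ) + 1) / d)) * (k : ℝ) ^ ((m : ℝ) / d)
            else c / k)
          * (if h : i.val = 0 then Real.exp t
            else Real.exp (-(w ⟨i.val - 1, by have := i.isLt; omega⟩) * t)))
        * ∑ j, u1star d m x fval J i j * vr j := by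
    intro i
    rw [gstarCK, gstarT, Matrix.diagonal_mul_diagonal, ← Matrix.mulVec_mulVec,
      Matrix.mulVec_diagonal]
    rcases eq_or_ne i.val 0 with h | h
    · simp only [Matrix.mulVec, dotProduct, h, if_pos, dif_pos]
    · simp only [Matrix.mulVec, dotProduct, if_neg h, dif_neg h]
  have habs : ∀ (A S B : ℝ), 0 < A → |A * S| < c → A * B = c → |S| ≤ B := by
    intro A S B hA h hE
    rw [abs_mul, abs_of_pos hA] at h
    rw [← hE] at h
    exact le_of_lt ((mul_lt_mul_iff_right₀ hA).mp h)
  -- the candidate vector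
  refine ⟨fun i => if i.val = 0 then v i else -v i, ?_, ?_, ?_, ?_⟩ <;> try beta_reduce
  · intro h
    apply hvne
    funext i
    have := congrFun h i
    by_cases hi : i.val = 0
    · rwa [if_pos hi] at this
    · rw [if_neg hi] at this; simpa using (neg_eq_zero.mp this)
  · -- row 0
    have h0 := hv 0
    have hz : ((0:Fin (d+m+1)).val = 0) := rfl
    rw [hrow 0] at h0
    rw [if_pos hz, dif_pos hz, row0_sum d m x fval J vr] at h0
    have key := habs _ _ (Real.exp (-t)) (by positivity) h0
      (by rw [mul_assoc, ← Real.exp_add]; simp)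
    have : ((if (0:Fin (d+m+1)).val = 0 then v 0 else -v 0 : ℤ) : ℝ)
        + ∑ i : Fin d, ((if (⟨i.val + 1, by have := i.isLt; omega⟩ : Fin (d+m+1)).val = 0
            then v ⟨i.val + 1, by have := i.isLt; omega⟩
            else -v ⟨i.val + 1, by have := i.isLt; omega⟩ : ℤ) : ℝ) * x i
        + ∑ j : Fin m, ((if (⟨d + j.val + 1, by have := j.isLt; omega⟩ : Fin (d+m+1)).val = 0
            then v ⟨d + j.val + 1, by have := j.isLt; omega⟩
            else -v ⟨d + j.val + 1, by have := j.isLt; omega⟩ : ℤ) : ℝ) * fval j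
        = vr 0 + ∑ i : Fin d, (-x i) * vr ⟨i.val+1, by have := i.isLt; omega⟩
          + ∑ j : Fin m, (-fval j) * vr ⟨d+j.val+1, by have := j.isLt; omega⟩ := by
      rw [if_pos hz]
      congr 1
      · congr 1
        apply Finset.sum_congr rfl
        intro i _
        rw [if_neg (Nat.succ_ne_zero _)]
        push_cast
        ring
      · apply Finset.sum_congr rfl
        intro j _
        rw [if_neg (Nat.succ_ne_zero _)]
        push_cast
        ring
    rw [this]
    exact key
  · -- middle rows
    intro i
    have hiLt := i.isLt
    have hmid := hv ⟨i.val+1, by omega⟩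
    rw [hrow ⟨i.val+1, by omega⟩] at hmid
    rw [if_neg (by simp only [Fin.val_mk]; omega), if_pos (by simp only [Fin.val_mk]; omega), dif_neg (by simp only [Fin.val_mk]; omega)] at hmid
    have hwidx : w ⟨(⟨i.val+1, by omega⟩ : Fin (d+m+1)).val - 1, by omega⟩ = wmax := by
      apply hweq
      simp only [Fin.val_mk]
      omega
    rw [hwidx, rowmid_sum d m x fval J vr i] at hmid
    have hA : (0:ℝ) < c ^ (-(((m : ℝ) + 1) / d)) * (k : ℝ) ^ ((m : ℝ) / d)
        * Real.exp (-wmax * t) := by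
      have := Real.rpow_pos_of_pos hc0 (-(((m : ℝ) + 1) / d))
      have := Real.rpow_pos_of_pos (show (0:ℝ) < (k:ℝ) by exact_mod_cast hk) ((m : ℝ) / d)
      positivity
    have hE : (c ^ (-(((m : ℝ) + 1) / d)) * (k : ℝ) ^ ((m : ℝ) / d) * Real.exp (-wmax * t))
        * (c * c ^ (((m : ℝ) + 1) / d) * (k : ℝ) ^ (-((m : ℝ) / d)) * Real.exp (wmax * t))
        = c := by
      rw [Real.rpow_neg hc0.le, Real.rpow_neg (Nat.cast_nonneg k), neg_mul, Real.exp_neg]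
      have h1 : c ^ (((m : ℝ) + 1) / d) ≠ 0 := ne_of_gt (Real.rpow_pos_of_pos hc0 _)
      have h2 : ((k : ℝ)) ^ ((m : ℝ) / d) ≠ 0 := ne_of_gt
        (Real.rpow_pos_of_pos (show (0:ℝ) < (k:ℝ) by exact_mod_cast hk) _)
      have h3 : Real.exp (wmax * t) ≠ 0 := Real.exp_ne_zero _
      field_simp
    have key := habs _ _ _ hA hmid hE
    have heq : ((if (⟨i.val + 1, by omega⟩ : Fin (d+m+1)).val = 0
            then v ⟨i.val + 1, by omega⟩ else -v ⟨i.val + 1, by omega⟩ : ℤ) : ℝ)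
        + ∑ j : Fin m, J i j * ((if (⟨d + j.val + 1, by have := j.isLt; omega⟩ : Fin (d+m+1)).val = 0
            then v ⟨d + j.val + 1, by have := j.isLt; omega⟩
            else -v ⟨d + j.val + 1, by have := j.isLt; omega⟩ : ℤ) : ℝ)
        = -(vr ⟨i.val+1, by omega⟩
            + ∑ j : Fin m, J i j * vr ⟨d+j.val+1, by have := j.isLt; omega⟩) := by
      rw [if_neg (Nat.succ_ne_zero _)]
      rw [neg_add, ← Finset.sum_neg_distrib]
      congr 1
      · push_cast; ring
      · apply Finset.sum_congr rfl
        intro j _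
        rw [if_neg (Nat.succ_ne_zero _)]
        push_cast
        ring
    rw [heq, abs_neg]
    exact key
  · -- bottom rows
    intro j
    have hjLt := j.isLt
    have hbot := hv ⟨d+j.val+1, by omega⟩
    rw [hrow ⟨d+j.val+1, by omega⟩] at hbot
    rw [if_neg (by simp only [Fin.val_mk]; omega), if_neg (by simp only [Fin.val_mk]; omega), dif_neg (by simp only [Fin.val_mk]; omega)] at hbot
    have hwidx : (⟨(⟨d+j.val+1, by omega⟩ : Fin (d+m+1)).val - 1, by omega⟩ : Fin (d+m))
        = ⟨d + j.val, by omega⟩ := by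
      apply Fin.ext; simp only [Fin.val_mk]; omega
    rw [hwidx, rowbot_sum d m x fval J vr j] at hbot
    have hkpos : (0:ℝ) < (k:ℝ) := by exact_mod_cast hk
    have hA : (0:ℝ) < c / k * Real.exp (-(w ⟨d + j.val, by omega⟩) * t) := by positivity
    have hE : (c / k * Real.exp (-(w ⟨d + j.val, by omega⟩) * t))
        * ((k : ℝ) * Real.exp (w ⟨d + j.val, by omega⟩ * t)) = c := by
      have hkne : (k:ℝ) ≠ 0 := ne_of_gt hkpos
      have h4 : Real.exp (-(w (⟨d + j.val, by omega⟩ : Fin (d+m))) * t)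
          * Real.exp ((w (⟨d + j.val, by omega⟩ : Fin (d+m))) * t) = 1 := by
        rw [← Real.exp_add]
        norm_num
      have h5 : (c / k * Real.exp (-(w (⟨d + j.val, by omega⟩ : Fin (d+m))) * t))
          * ((k : ℝ) * Real.exp ((w (⟨d + j.val, by omega⟩ : Fin (d+m))) * t))
          = c * (Real.exp (-(w (⟨d + j.val, by omega⟩ : Fin (d+m))) * t)
            * Real.exp ((w (⟨d + j.val, by omega⟩ : Fin (d+m))) * t)) := by
        field_simp
      rw [h5, h4, mul_one]
    have key := habs _ _ _ hA hbot hE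
    rw [if_neg (Nat.succ_ne_zero _)]
    push_cast
    rw [abs_neg]
    exact key
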